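/- Let $k > 0$, $n \ge 1$, and let $\{\omega_{ij}\}$ be the weights $\omega_{ij} = \beta(t_i - t_j)$ for $1 \le j \le i$ and $\omega_{i0} = 0$, where $\beta(t) = \gamma e^{-\delta t}$ with $\gamma, \delta > 0$ and $t_j = jk$. Then for every real vector $\phi = (\phi^0, \dots, \phi^n)$, the quadratic form is nonnegative: $k\sum_{i=1}^n \Big(k\sum_{j=0}^i \omega_{ij}\phi^j\Big)\phi^i \ge 0$. -/

import Mathlib

/-- Positivity of the right rectangle rule for the exponential kernel. -/
theorem stmt_14 (γ δ k : ℝ) (hγ : 0 < γ) (hδ : 0 < δ) (hk : 0 < k)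
    (n : ℕ) (hn : 1 ≤ n) (φ : ℕ → ℝ) :
    0 ≤ k * ∑ i ∈ Finset.Icc 1 n,
        (k * ∑ j ∈ Finset.Icc 1 i,
          γ * Real.exp (-δ * ((i : ℝ) * k - (j : ℝ) * k)) * φ j) * φ i := by
  set r : ℝ := Real.exp (-(δ * k)) with hr
  have hr0 : 0 < r := Real.exp_pos _
  have hr1 : r ≤ 1 := by
    rw [hr]
    apply Real.exp_le_one_iff.mpr
    nlinarith
  set y : ℕ → ℝ := fun i => ∑ j ∈ Finset.Icc 1 i, r ^ (i - j) * φ j with hy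
  have hy0 : y 0 = 0 := by simp [hy]
  have hrec : ∀ i : ℕ, y (i + 1) = r * y i + φ (i + 1) := by
    intro i
    rw [hy]
    simp only
    rw [Finset.sum_Icc_succ_top (by omega : 1 ≤ i + 1)]
    rw [Finset.mul_sum]
    congr 1
    · apply Finset.sum_congr rfl
      intro j hj
      have hji : j ≤ i := (Finset.mem_Icc.mp hj).2
      have : i + 1 - j = (i - j) + 1 := by omega
      rw [this, pow_succ]
      ring
    · simp
  set T : ℕ → ℝ := fun m => ∑ i ∈ Finset.Icc 1 m, y i * φ i with hT
  have key : ∀ m : ℕ, y m ^ 2 ≤ 2 * T m := by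
    intro m
    induction m with
    | zero => simp [hT, hy0]
    | succ p ih =>
      have hTs : T (p + 1) = T p + y (p + 1) * φ (p + 1) := by
        rw [hT]; simp only
        rw [Finset.sum_Icc_succ_top (by omega : 1 ≤ p + 1)]
      have hφ : φ (p + 1) = y (p + 1) - r * y p := by
        have := hrec p; linarith
      rw [hTs, hφ]
      nlinarith [ih, sq_nonneg (y p - r * y (p + 1)),
        mul_nonneg (mul_nonneg (sub_nonneg.mpr hr1) (by linarith : (0:ℝ) ≤ 1 + r)) (sq_nonneg (y (p + 1)))]
  have hTn : 0 ≤ T n := by nlinarith [key n, sq_nonneg (y n)]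
  have hsum : ∀ i ∈ Finset.Icc 1 n,
      (k * ∑ j ∈ Finset.Icc 1 i,
        γ * Real.exp (-δ * ((i : ℝ) * k - (j : ℝ) * k)) * φ j) * φ i
      = (k * γ) * (y i * φ i) := by
    intro i _
    have : ∑ j ∈ Finset.Icc 1 i,
        γ * Real.exp (-δ * ((i : ℝ) * k - (j : ℝ) * k)) * φ j = γ * y i := by
      rw [hy]; simp only
      rw [Finset.mul_sum]
      apply Finset.sum_congr rfl
      intro j hj
      have hji : j ≤ i := (Finset.mem_Icc.mp hj).2
      have hcast : -δ * ((i : ℝ) * k - (j : ℝ) * k) = ((i - j : ℕ) : ℝ) * (-(δ * k)) := by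
        rw [Nat.cast_sub hji]; ring
      rw [hcast, Real.exp_nat_mul]
      ring
    rw [this]; ring
  rw [Finset.sum_congr rfl hsum, ← Finset.mul_sum]
  have : (0:ℝ) ≤ T n := hTn
  rw [hT] at this
  positivity
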